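/- Let R = k[[x,y,z]]/(xy) and for l ≥ 1 let A_l denote the 2×2 matrix (y, -z^l; 0, x) over R. Let N be an R-module fitting in a short exact sequence 0 → I_(l_1) ⊕ ⋯ ⊕ I_(l_r) → N → I_1 → 0, where I_l = (x, z^l)R. Then N is isomorphic to the cokernel of the block upper-triangular matrix D(u_1,…,u_r) with diagonal blocks A_(l_1), …, A_(l_r), A_1 and off-diagonal blocks U_i = (0, u_i; 0, 0) in the last block column, for some elements u_i each either a unit of R or zero. -/

import Mathlib

open CategoryTheory MvPowerSeries

universe u

/-- The two-dimensional `A_∞` hypersurface singularity `k[[x,y,z]]/(xy)`. -/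
abbrev AInf (k : Type u) [Field k] : Type u :=
  MvPowerSeries (Fin 3) k ⧸
    Ideal.span {(X 0 : MvPowerSeries (Fin 3) k) * (X 1 : MvPowerSeries (Fin 3) k)}

/-- The projection `k[[x,y,z]] → k[[x,y,z]]/(xy)`. -/
noncomputable abbrev aInfMk (k : Type u) [Field k] :
    MvPowerSeries (Fin 3) k →+* AInf k :=
  Ideal.Quotient.mk _

/-- The images of `x`, `y`, `z` in `R = k[[x,y,z]]/(xy)`. -/
noncomputable abbrev xA (k : Type u) [Field k] : AInf k := aInfMk k (X 0)
noncomputable abbrev yA (k : Type u) [Field k] : AInf k := aInfMk k (X 1)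
noncomputable abbrev zA (k : Type u) [Field k] : AInf k := aInfMk k (X 2)

/-- The ideal `I_l = (x, z^l)R` for `l ≥ 1`. -/
noncomputable abbrev IIdeal (k : Type u) [Field k] (l : ℕ) : Ideal (AInf k) :=
  Ideal.span {xA k, zA k ^ l}

/-- The ideal `J_l = (y, z^l)R` for `l ≥ 1`. -/
noncomputable abbrev JIdeal (k : Type u) [Field k] (l : ℕ) : Ideal (AInf k) :=
  Ideal.span {yA k, zA k ^ l}

/-- The module `I_l`, with the convention `I_0 = R`. -/
noncomputable def IMod (k : Type u) [Field k] (l : ℕ) : ModuleCat.{u} (AInf k) :=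
  if l = 0 then ModuleCat.of (AInf k) (AInf k) else ModuleCat.of (AInf k) (IIdeal k l)

/-- The matrix `A_l = (y, -z^l; 0, x)` over `R = k[[x,y,z]]/(xy)`, presenting `I_l`. -/
noncomputable def AMat (k : Type u) [Field k] (l : ℕ) : Matrix (Fin 2) (Fin 2) (AInf k) :=
  !![yA k, -(zA k ^ l); 0, xA k]

/-- The block matrix `D(u₁, …, u_r)` with diagonal blocks `A_(l 0), …, A_(l (r-1)), A_1`
and blocks `U_i = (0, u_i; 0, 0)` in the last block column. -/
noncomputable def DMat (k : Type u) [Field k] {r : ℕ} (l : Fin r → ℕ) (u : Fin r → AInf k) :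
    Matrix (Fin (r + 1) × Fin 2) (Fin (r + 1) × Fin 2) (AInf k) :=
  fun p q =>
    if p.1 = q.1 then AMat k (Fin.snoc (α := fun _ => ℕ) l 1 p.1) p.2 q.2
    else if q.1 = Fin.last r then
      if h : (p.1 : ℕ) < r then (if p.2 = 0 ∧ q.2 = 1 then u ⟨p.1, h⟩ else 0) else 0
    else 0


set_option maxHeartbeats 1600000
set_option synthInstance.maxHeartbeats 400000

namespace AInfAux

open Finsupp

variable {k : Type u} [Field k]

noncomputable abbrev S (k : Type u) [Field k] := MvPowerSeries (Fin 3) k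

/-- The shifted series `T` with `T n = F (n + single i 1)`. -/
noncomputable def shift (i : Fin 3) (F : S k) : S k := fun n => F (n + Finsupp.single i 1)

lemma coeff_X_mul_shift (i : Fin 3) (F : S k) (m : Fin 3 →₀ ℕ) :
    coeff m (X i * shift i F) = if m i = 0 then 0 else coeff m F := by
  rw [X_def, coeff_monomial_mul]
  by_cases h : Finsupp.single i 1 ≤ m
  · rw [if_pos h]
    have h1 : 1 ≤ m i := by simpa using (Finsupp.single_le_iff).mp h
    rw [if_neg (by omega)]
    have : m - Finsupp.single i 1 + Finsupp.single i 1 = m := tsub_add_cancel_of_le h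
    simp only [one_mul]
    show (shift i F) (m - Finsupp.single i 1) = coeff m F
    unfold shift
    rw [this]
    rfl
  · rw [if_neg h, if_pos]
    by_contra hc
    exact h (Finsupp.single_le_iff.mpr (by omega))

lemma X_dvd_of_coeff (i : Fin 3) (F : S k) (h : ∀ m, m i = 0 → coeff m F = 0) :
    X i ∣ F := by
  refine ⟨shift i F, ?_⟩
  ext m
  rw [coeff_X_mul_shift]
  by_cases hm : m i = 0
  · rw [if_pos hm, h m hm]
  · rw [if_neg hm]

lemma coeff_X_mul_of_eq_zero (i : Fin 3) (T : S k) (m : Fin 3 →₀ ℕ) (hm : m i = 0) :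
    coeff m (X i * T) = 0 := by
  rw [X_def, coeff_monomial_mul, if_neg]
  intro hc
  have := Finsupp.single_le_iff.mp hc
  omega

lemma X_mul_cancel (i : Fin 3) {T T' : S k} (h : X i * T = X i * T') : T = T' := by
  ext n
  have := congrArg (coeff (Finsupp.single i 1 + n)) h
  rwa [X_def, coeff_add_monomial_mul, coeff_add_monomial_mul, one_mul, one_mul] at this

lemma X_dvd_of_X_dvd_mul_X_pow {i j : Fin 3} (hij : i ≠ j) (l : ℕ) (F : S k)
    (h : X i ∣ F * X j ^ l) : X i ∣ F := by
  obtain ⟨T, hT⟩ := h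
  apply X_dvd_of_coeff
  intro m hm
  have h1 : coeff (m + Finsupp.single j l) (F * X j ^ l) = coeff m F := by
    rw [X_pow_eq, coeff_add_mul_monomial, mul_one]
  have h2 : coeff (m + Finsupp.single j l) (X i * T) = 0 := by
    apply coeff_X_mul_of_eq_zero
    simp [Finsupp.single_apply, hij.symm, hm]
  rw [hT] at h1
  rw [h2] at h1
  exact h1.symm

lemma key_syzygy (l : ℕ) {A B C : S k} (h : A * X 0 + B * X 2 ^ l = C * (X 0 * X 1)) :
    ∃ T C', B = T * X 0 ∧ A = C' * X 1 - T * X 2 ^ l := by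
  have hdvd : X (0 : Fin 3) ∣ B * X 2 ^ l := ⟨C * X 1 - A, by linear_combination h⟩
  obtain ⟨T, hT⟩ := X_dvd_of_X_dvd_mul_X_pow (i := 0) (j := 2) (by decide) l B hdvd
  refine ⟨T, C, by linear_combination hT, ?_⟩
  have : X (0:Fin 3) * A = X 0 * (C * X 1 - T * X 2 ^ l) := by linear_combination h - X 2 ^ l * hT
  exact X_mul_cancel 0 this

lemma ann_x_S {Q C : S k} (h : X 0 * Q = C * (X 0 * X 1)) : Q = C * X 1 :=
  X_mul_cancel 0 (by linear_combination h)

lemma strip (i : Fin 3) (F : S k) :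
    ∃ F₀ F₁, F = F₀ + X i * F₁ ∧ (∀ m : Fin 3 →₀ ℕ, m i ≠ 0 → coeff m F₀ = 0)
      ∧ ∀ m : Fin 3 →₀ ℕ, m i = 0 → coeff m F₀ = coeff m F := by
  refine ⟨F - X i * shift i F, shift i F, by ring, fun m hm => ?_, fun m hm => ?_⟩
  · rw [map_sub, coeff_X_mul_shift, if_neg hm, sub_self]
  · rw [map_sub, coeff_X_mul_shift, if_pos hm, sub_zero]

lemma coeff_mul_X_pow_of_ne {i j : Fin 3} (hij : j ≠ i) (n : ℕ) {F : S k}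
    (hF : ∀ m : Fin 3 →₀ ℕ, m i ≠ 0 → coeff m F = 0) :
    ∀ m : Fin 3 →₀ ℕ, m i ≠ 0 → coeff m (F * X j ^ n) = 0 := by
  intro m hm
  rw [X_pow_eq, coeff_mul_monomial]
  split_ifs with h
  · rw [hF _ (by simpa [Finsupp.single_apply, hij] using hm), zero_mul]
  · rfl

lemma y_split (l : ℕ) {A B M : S k} (h : A * X 0 + B * X 2 ^ l = X 1 * M) :
    ∃ Γ A' B', A = X 2 ^ l * Γ + X 1 * A' ∧ B = -(X 0 * Γ) + X 1 * B' := by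
  obtain ⟨A₀, A₁, hA, hA0, -⟩ := strip 1 A
  obtain ⟨B₀, B₁, hB, hB0, -⟩ := strip 1 B
  have hzero : A₀ * X 0 + B₀ * X 2 ^ l = 0 := by
    have heq : A₀ * X 0 + B₀ * X 2 ^ l = X 1 * (M - A₁ * X 0 - B₁ * X 2 ^ l) := by
      rw [hA, hB] at h; ring_nf; ring_nf at h; linear_combination h
    ext m
    by_cases hm : m 1 = 0
    · rw [heq, coeff_X_mul_of_eq_zero 1 _ m hm, map_zero]
    · rw [map_add, map_zero]
      rw [show (X (0:Fin 3) : S k) = X 0 ^ 1 from (pow_one _).symm,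
        coeff_mul_X_pow_of_ne (i := 1) (j := 0) (by decide) 1 hA0 m hm,
        coeff_mul_X_pow_of_ne (i := 1) (j := 2) (by decide) l hB0 m hm, add_zero]
  have hdvd : X (0:Fin 3) ∣ B₀ * X 2 ^ l := ⟨-A₀, by linear_combination hzero⟩
  obtain ⟨Γ', hΓ⟩ := X_dvd_of_X_dvd_mul_X_pow (i := 0) (j := 2) (by decide) l B₀ hdvd
  have hA₀ : X (0:Fin 3) * A₀ = X 0 * (X 2 ^ l * (-Γ')) := by
    linear_combination hzero - X 2 ^ l * hΓ
  have hA₀' := X_mul_cancel 0 hA₀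
  exact ⟨-Γ', A₁, B₁, by rw [hA, hA₀'], by rw [hB, hΓ]; ring⟩

lemma mem_span_X (F : S k) (h : constantCoeff F = 0) :
    ∃ h0 h1 h2 : S k, F = X 0 * h0 + X 1 * h1 + X 2 * h2 := by
  obtain ⟨F0, F1, hF, hF0, hF0'⟩ := strip 0 F
  obtain ⟨G0, G1, hG, hG0, hG0'⟩ := strip 1 F0
  obtain ⟨H0, H1, hH, hH0, hH0'⟩ := strip 2 G0
  have hzero : H0 = 0 := by
    ext m
    rw [map_zero]
    by_cases h2 : m 2 = 0
    · by_cases h1 : m 1 = 0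
      · by_cases h0 : m 0 = 0
        · have hm : m = 0 := by
            ext i
            fin_cases i <;> assumption
          rw [hH0' m h2, hG0' m h1, hF0' m h0, hm]
          exact h
        · rw [hH0' m h2, hG0' m h1]
          exact hF0 m h0
      · rw [hH0' m h2]
        exact hG0 m h1
    · exact hH0 m h2
  refine ⟨F1, G1, H1, ?_⟩
  rw [hF, hG, hH, hzero]
  ring

lemma isUnit_of_constantCoeff (F : S k) (h : constantCoeff F ≠ 0) : IsUnit F :=
  isUnit_iff_constantCoeff.mpr (isUnit_iff_ne_zero.mpr h)

lemma mk_surj : Function.Surjective (aInfMk k) := Ideal.Quotient.mk_surjective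

lemma mk_eq_zero_iff {F : S k} :
    aInfMk k F = 0 ↔ ∃ C, F = C * (X 0 * X 1) := by
  rw [Ideal.Quotient.eq_zero_iff_mem, Ideal.mem_span_singleton]
  constructor
  · rintro ⟨C, hC⟩; exact ⟨C, by rw [hC]; ring⟩
  · rintro ⟨C, hC⟩; exact ⟨C, by rw [hC]; ring⟩

lemma xy_zero : xA k * yA k = 0 := by
  rw [show xA k * yA k = aInfMk k (X 0 * X 1) from (map_mul _ _ _).symm]
  exact mk_eq_zero_iff.mpr ⟨1, (one_mul _).symm⟩

lemma rel_syzygy (l : ℕ) {a b : AInf k} (h : a * xA k + b * zA k ^ l = 0) :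
    ∃ s t, a = s * yA k - t * zA k ^ l ∧ b = t * xA k := by
  obtain ⟨A, rfl⟩ := mk_surj (k := k) a
  obtain ⟨B, rfl⟩ := mk_surj (k := k) b
  have : aInfMk k (A * X 0 + B * X 2 ^ l) = 0 := by
    rw [map_add, map_mul, map_mul, map_pow]; exact h
  obtain ⟨C, hC⟩ := mk_eq_zero_iff.mp this
  obtain ⟨T, C', hB, hA⟩ := key_syzygy l hC
  exact ⟨aInfMk k C', aInfMk k T, by rw [hA]; push_cast [map_sub, map_mul, map_pow]; ring,
    by rw [hB, map_mul]⟩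

lemma ann_x {q : AInf k} (h : xA k * q = 0) : ∃ m, q = m * yA k := by
  obtain ⟨Q, rfl⟩ := mk_surj (k := k) q
  have : aInfMk k (X 0 * Q) = 0 := by rw [map_mul]; exact h
  obtain ⟨C, hC⟩ := mk_eq_zero_iff.mp this
  have h2 : X (0:Fin 3) * Q = X 0 * (C * X 1) := by linear_combination hC
  exact ⟨aInfMk k C, by rw [X_mul_cancel 0 h2, map_mul]⟩

lemma ann_y {q : AInf k} (h : yA k * q = 0) : ∃ m, q = m * xA k := by
  obtain ⟨Q, rfl⟩ := mk_surj (k := k) q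
  have : aInfMk k (X 1 * Q) = 0 := by rw [map_mul]; exact h
  obtain ⟨C, hC⟩ := mk_eq_zero_iff.mp this
  have h2 : X (1:Fin 3) * Q = X 1 * (C * X 0) := by linear_combination hC
  exact ⟨aInfMk k C, by rw [X_mul_cancel 1 h2, map_mul]⟩

lemma decomp_ann (l : ℕ) {a b : AInf k} (h : xA k * (a * xA k + b * zA k ^ l) = 0) :
    ∃ γ a' b', a = zA k ^ l * γ + yA k * a' ∧ b = -(xA k * γ) + yA k * b' := by
  obtain ⟨m, hm⟩ := ann_x h
  obtain ⟨A, rfl⟩ := mk_surj (k := k) a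
  obtain ⟨B, rfl⟩ := mk_surj (k := k) b
  obtain ⟨M, rfl⟩ := mk_surj (k := k) m
  have : aInfMk k (A * X 0 + B * X 2 ^ l - M * X 1) = 0 := by
    push_cast [map_sub, map_add, map_mul, map_pow]
    rw [sub_eq_zero]; exact hm
  obtain ⟨C, hC⟩ := mk_eq_zero_iff.mp this
  have h2 : A * X 0 + B * X 2 ^ l = X 1 * (M + C * X 0) := by linear_combination hC
  obtain ⟨Γ, A', B', hA, hB⟩ := y_split l h2
  exact ⟨aInfMk k Γ, aInfMk k A', aInfMk k B',
    by rw [hA]; push_cast [map_add, map_mul, map_pow]; ring,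
    by rw [hB]; push_cast [map_add, map_neg, map_mul]; ring⟩

lemma unit_or_memMax (c : AInf k) :
    IsUnit c ∨ ∃ α β ζ, c = α * xA k + β * yA k + ζ * zA k := by
  obtain ⟨C, rfl⟩ := mk_surj (k := k) c
  by_cases h : constantCoeff C = 0
  · obtain ⟨h0, h1, h2, hC⟩ := mem_span_X C h
    exact Or.inr ⟨aInfMk k h0, aInfMk k h1, aInfMk k h2,
      by rw [hC]; push_cast [map_add, map_mul]; ring⟩
  · exact Or.inl ((isUnit_of_constantCoeff C h).map _)

end AInfAux

open AInfAux

/-- Claim 4.3(1) ((a)⇒(b)): if `0 → I_(l 0) ⊕ ⋯ ⊕ I_(l (r-1)) → N → I_1 → 0` is exact,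
then `N` is the cokernel of `D(u₁, …, u_r)` for some `u_i` each a unit or zero. -/
theorem aInf_extension_matrix (k : Type u) [Field k] (r : ℕ) (l : Fin r → ℕ)
    (hl : ∀ i, 1 ≤ l i)
    (N : Type u) [AddCommGroup N] [Module (AInf k) N]
    (f : (∀ i : Fin r, IIdeal k (l i)) →ₗ[AInf k] N)
    (g : N →ₗ[AInf k] IIdeal k 1)
    (hinj : Function.Injective f) (hex : Function.Exact f g)
    (hsurj : Function.Surjective g) :
    ∃ u : Fin r → AInf k, (∀ i, IsUnit (u i) ∨ u i = 0) ∧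
      Nonempty (N ≃ₗ[AInf k]
        ((Fin (r + 1) × Fin 2 → AInf k) ⧸
          LinearMap.range (Matrix.toLin' (DMat k l u)))) := by
  classical
  letI : Algebra ℕ (AInf k) := Semiring.toNatAlgebra
  letI : Algebra ℤ (AInf k) := Ring.toIntAlgebra _
  have hxy : xA k * yA k = 0 := xy_zero
  have hxmem : ∀ L : ℕ, xA k ∈ IIdeal k L := fun L => Ideal.subset_span (by simp)
  have hzmem : ∀ L : ℕ, zA k ^ L ∈ IIdeal k L := fun L => Ideal.subset_span (by simp)
  have hzmem1 : zA k ∈ IIdeal k 1 := by simpa using hzmem 1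
  set e1 : Fin r → N := fun i => f (Pi.single i ⟨xA k, hxmem (l i)⟩) with he1
  set e2 : Fin r → N := fun i => f (Pi.single i ⟨zA k ^ l i, hzmem (l i)⟩) with he2
  have hps : ∀ (i : Fin r) (cc : AInf k) (v : IIdeal k (l i)),
      (Pi.single i (cc • v) : ∀ j, IIdeal k (l j)) = cc • (Pi.single i v : ∀ j, IIdeal k (l j)) := by
    intro i cc v
    funext j
    by_cases h : j = i
    · subst h; simp
    · simp [Pi.single_eq_of_ne h]
  have hfsum : ∀ (w : ∀ i : Fin r, IIdeal k (l i)) (c d : Fin r → AInf k),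
      (∀ i, (w i : AInf k) = c i * xA k + d i * zA k ^ l i) →
      f w = ∑ i, (c i • e1 i + d i • e2 i) := by
    intro w c d hw
    have hw' : w = fun i => c i • (⟨xA k, hxmem (l i)⟩ : IIdeal k (l i))
        + d i • (⟨zA k ^ l i, hzmem (l i)⟩ : IIdeal k (l i)) := by
      funext i
      ext
      simpa using hw i
    have hsingle : w = ∑ i, Pi.single i (w i) := by
      rw [Finset.univ_sum_single]
    rw [hsingle, map_sum]
    refine Finset.sum_congr rfl fun i _ => ?_
    rw [hw']
    rw [Pi.single_add, map_add, hps, hps, map_smul, map_smul]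
  have hye1 : ∀ i, yA k • e1 i = 0 := by
    intro i
    rw [he1, ← map_smul, ← hps]
    have h0 : (yA k • (⟨xA k, hxmem (l i)⟩ : IIdeal k (l i))) = 0 := by
      ext
      show yA k * xA k = 0
      rw [mul_comm]; exact hxy
    rw [h0]
    simp
  have hze1 : ∀ i, zA k ^ l i • e1 i = xA k • e2 i := by
    intro i
    rw [he1, he2, ← map_smul, ← map_smul, ← hps, ← hps]
    have h0 : (zA k ^ l i • (⟨xA k, hxmem (l i)⟩ : IIdeal k (l i)))
        = xA k • (⟨zA k ^ l i, hzmem (l i)⟩ : IIdeal k (l i)) := by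
      ext
      show zA k ^ l i * xA k = xA k * zA k ^ l i
      ring
    rw [h0]
  have hgf : ∀ w, g (f w) = 0 := fun w => (hex (f w)).mpr ⟨w, rfl⟩
  obtain ⟨n1₀, hn1₀⟩ := hsurj ⟨xA k, hxmem 1⟩
  obtain ⟨n2₀, hn2₀⟩ := hsurj ⟨zA k, hzmem1⟩
  have h1 : g (yA k • n1₀) = 0 := by
    rw [map_smul, hn1₀]
    ext
    show yA k * xA k = 0
    rw [mul_comm]; exact hxy
  obtain ⟨p, hp⟩ := (hex _).mp h1
  have hxp : xA k • p = 0 := by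
    apply hinj
    rw [map_smul, hp, map_zero, smul_smul, hxy]
    exact zero_smul (AInf k) n1₀
  choose pa pb hpab using fun i => Submodule.mem_span_pair.mp (p i).2
  have hpx : ∀ i, xA k * (pa i * xA k + pb i * zA k ^ l i) = 0 := by
    intro i
    have h0 : ((xA k • p) i : AInf k) = 0 := by rw [hxp]; rfl
    have h1 : ((xA k • p) i : AInf k) = xA k * (p i : AInf k) := rfl
    rw [h1, ← hpab i] at h0
    simpa [smul_eq_mul] using h0
  choose pγ pa' pb' hpA hpB using fun i => decomp_ann (l i) (hpx i)
  set α : ∀ i : Fin r, IIdeal k (l i) := fun i =>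
    pa' i • (⟨xA k, hxmem (l i)⟩ : IIdeal k (l i)) + pb' i • ⟨zA k ^ l i, hzmem (l i)⟩ with hα
  have hpα : p = fun i => yA k • α i := by
    funext i
    ext
    show (p i : AInf k) = yA k * (α i : AInf k)
    have hαv : (α i : AInf k) = pa' i * xA k + pb' i * zA k ^ l i := by
      simp [hα, smul_eq_mul]
    rw [hαv, ← hpab i]
    simp only [smul_eq_mul]
    linear_combination xA k * hpA i + zA k ^ l i * hpB i
  set n1' := n1₀ - f α with hn1'
  have hyn1' : yA k • n1' = 0 := by
    rw [hn1', smul_sub, ← map_smul, sub_eq_zero]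
    exact hp.symm.trans (congrArg f hpα)
  have hgn1' : g n1' = ⟨xA k, hxmem 1⟩ := by
    rw [hn1', map_sub, hn1₀, hgf, sub_zero]
  have h2 : g (xA k • n2₀ - zA k • n1') = 0 := by
    rw [map_sub, map_smul, map_smul, hn2₀, hgn1']
    ext
    show xA k * zA k - zA k * xA k = 0
    ring
  obtain ⟨q, hq⟩ := (hex _).mp h2
  have hyq : yA k • q = 0 := by
    apply hinj
    rw [map_smul, hq, map_zero, smul_sub, smul_smul, smul_smul,
      mul_comm (yA k) (xA k), hxy, mul_comm (yA k) (zA k), ← smul_smul, hyn1', smul_zero, sub_zero]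
    exact zero_smul (AInf k) n2₀
  have hqy : ∀ i, yA k * (q i : AInf k) = 0 := by
    intro i
    have h0 : ((yA k • q) i : AInf k) = 0 := by rw [hyq]; rfl
    exact h0
  choose m hqm using fun i => ann_y (hqy i)
  have hdec : ∀ i : Fin r, ∃ uu ss ww : AInf k, ∃ bb : IIdeal k (l i),
      (IsUnit uu ∨ uu = 0) ∧ m i = uu + zA k * ss + (bb : AInf k) + yA k * ww := by
    intro i
    rcases unit_or_memMax (m i) with hu | ⟨aa, b2, zz, heq⟩
    · exact ⟨m i, 0, 0, 0, Or.inl hu, by simp⟩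
    · refine ⟨0, zz, b2, ⟨aa * xA k, Ideal.mul_mem_left _ _ (hxmem _)⟩, Or.inr rfl, ?_⟩
      rw [heq]; push_cast; ring
  choose uu ss ww bb huu hmeq using hdec
  set αf : ∀ i : Fin r, IIdeal k (l i) := fun i => ss i • ⟨xA k, hxmem (l i)⟩ with hαf
  set n1 := n1' + f αf with hn1
  set n2 := n2₀ - f bb with hn2
  have hyαf : yA k • αf = 0 := by
    funext i
    ext
    show yA k * (ss i * xA k) = 0
    linear_combination ss i * hxy
  have hyn1 : yA k • n1 = 0 := by
    rw [hn1, smul_add, hyn1', ← map_smul, hyαf, map_zero, add_zero]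
  have hgn1 : g n1 = ⟨xA k, hxmem 1⟩ := by
    rw [hn1, map_add, hgn1', hgf, add_zero]
  have hgn2 : g n2 = ⟨zA k, hzmem1⟩ := by
    rw [hn2, map_sub, hn2₀, hgf, sub_zero]
  set u : Fin r → AInf k := fun i => -uu i with huXdef
  have hunit : ∀ i, IsUnit (u i) ∨ u i = 0 := by
    intro i
    rcases huu i with h | h
    · exact Or.inl h.neg
    · exact Or.inr (by rw [huXdef]; simp [h])
  have hkey : xA k • n2 - zA k • n1 = ∑ i, uu i • e1 i := by
    have hstep : xA k • n2 - zA k • n1 = f (fun i => q i - zA k • αf i - xA k • bb i) := by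
      have harg : (fun i => q i - zA k • αf i - xA k • bb i)
          = q - zA k • αf - xA k • bb := rfl
      rw [harg, map_sub, map_sub, map_smul, map_smul, hq, hn1, hn2, smul_sub, smul_add]
      abel
    rw [hstep]
    have := hfsum (fun i => q i - zA k • αf i - xA k • bb i) uu 0 (by
      intro i
      show (q i : AInf k) - zA k * (ss i * xA k) - xA k * (bb i : AInf k)
        = uu i * xA k + (0 : Fin r → AInf k) i * zA k ^ l i
      rw [hqm i]
      simp only [Pi.zero_apply, zero_mul, add_zero]
      linear_combination xA k * hmeq i + ww i * hxy)
    rw [this]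
    refine Finset.sum_congr rfl fun i _ => ?_
    rw [show ((0 : Fin r → AInf k) i) • e2 i = 0 from Module.zero_smul _, add_zero]
  -- matrix entry lemmas
  have hAv : ∀ L : ℕ, (AMat k L 0 0 = yA k) ∧ (AMat k L 0 1 = -(zA k ^ L))
      ∧ (AMat k L 1 0 = 0) ∧ (AMat k L 1 1 = xA k) := by
    intro L
    refine ⟨?_, ?_, ?_, ?_⟩ <;> simp [AMat]
  have hca : ∀ i : Fin r, ((i.castSucc : Fin (r+1)) : ℕ) < r := fun i => by
    simpa using i.isLt
  have hDdiag : ∀ (i : Fin r) (s t : Fin 2),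
      DMat k l u (i.castSucc, s) (i.castSucc, t) = AMat k (l i) s t := by
    intro i s t
    simp [DMat, Fin.snoc_castSucc]
  have hDlast : ∀ s t : Fin 2, DMat k l u (Fin.last r, s) (Fin.last r, t) = AMat k 1 s t := by
    intro s t
    simp [DMat, Fin.snoc_last]
  have hDoff : ∀ (i : Fin r) (s t : Fin 2),
      DMat k l u (i.castSucc, s) (Fin.last r, t) = if s = 0 ∧ t = 1 then u i else 0 := by
    intro i s t
    have hne : (i.castSucc : Fin (r+1)) ≠ Fin.last r := (Fin.castSucc_lt_last i).ne
    have heta : (⟨((i.castSucc : Fin (r+1)) : ℕ), hca i⟩ : Fin r) = i := by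
      ext; simp
    simp [DMat, hne, hca i, heta]
  have hD01 : ∀ (i j : Fin r) (s t : Fin 2), i ≠ j →
      DMat k l u (i.castSucc, s) (j.castSucc, t) = 0 := by
    intro i j s t hij
    have h1 : (i.castSucc : Fin (r+1)) ≠ j.castSucc := (Fin.castSucc_injective _).ne hij
    have h2 : (j.castSucc : Fin (r+1)) ≠ Fin.last r := (Fin.castSucc_lt_last j).ne
    simp [DMat, h1, h2]
  have hD02 : ∀ (j : Fin r) (s t : Fin 2), DMat k l u (Fin.last r, s) (j.castSucc, t) = 0 := by
    intro j s t
    have h1 : (Fin.last r) ≠ (j.castSucc : Fin (r+1)) := (Fin.castSucc_lt_last j).ne'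
    have h2 : (j.castSucc : Fin (r+1)) ≠ Fin.last r := (Fin.castSucc_lt_last j).ne
    simp [DMat, h1, h2]
  -- mulVec expansion
  have hmv : ∀ (c : Fin (r+1) × Fin 2 → AInf k) (pq : Fin (r+1) × Fin 2),
      (DMat k l u).mulVec c pq = ∑ j : Fin (r+1),
        (DMat k l u pq (j, 0) * c (j, 0) + DMat k l u pq (j, 1) * c (j, 1)) := by
    intro c pq
    simp only [Matrix.mulVec, dotProduct]
    rw [Fintype.sum_prod_type]
    exact Finset.sum_congr rfl fun j _ => Fin.sum_univ_two _
  have hmv1 : ∀ (c : Fin (r+1) × Fin 2 → AInf k) (i : Fin r) (s : Fin 2),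
      (DMat k l u).mulVec c (i.castSucc, s)
      = AMat k (l i) s 0 * c (i.castSucc, 0) + AMat k (l i) s 1 * c (i.castSucc, 1)
        + (if s = 0 then u i else 0) * c (Fin.last r, 1) := by
    intro c i s
    rw [hmv, Fin.sum_univ_castSucc]
    rw [Finset.sum_eq_single i (fun j _ hj => by
      rw [hD01 i j s 0 (Ne.symm hj), hD01 i j s 1 (Ne.symm hj), zero_mul, zero_mul, add_zero])
      (fun h => absurd (Finset.mem_univ i) h)]
    rw [hDdiag, hDdiag, hDoff, hDoff]
    have h0 : (if s = 0 ∧ (0 : Fin 2) = 1 then u i else 0) = 0 := by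
      simp
    have h1 : (if s = 0 ∧ (1 : Fin 2) = 1 then u i else 0) = if s = 0 then u i else 0 := by
      simp
    rw [h0, h1]
    ring
  have hmv2 : ∀ (c : Fin (r+1) × Fin 2 → AInf k) (s : Fin 2),
      (DMat k l u).mulVec c (Fin.last r, s)
      = AMat k 1 s 0 * c (Fin.last r, 0) + AMat k 1 s 1 * c (Fin.last r, 1) := by
    intro c s
    rw [hmv, Fin.sum_univ_castSucc]
    rw [Finset.sum_eq_zero (fun j _ => by
      rw [hD02 j s 0, hD02 j s 1, zero_mul, zero_mul, add_zero]), zero_add]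
    rw [hDlast, hDlast]
  -- the presentation map
  set φ : (Fin (r + 1) × Fin 2 → AInf k) →ₗ[AInf k] N :=
    { toFun := fun v => (∑ i : Fin r, (v (i.castSucc, 0) • e1 i + v (i.castSucc, 1) • e2 i))
        + v (Fin.last r, 0) • n1 + v (Fin.last r, 1) • n2
      map_add' := by
        intro v w
        simp only [Pi.add_apply, add_smul, Finset.sum_add_distrib]
        abel
      map_smul' := by
        intro c v
        simp only [Pi.smul_apply, smul_eq_mul, mul_smul, RingHom.id_apply, smul_add,
          Finset.smul_sum] } with hφdef
  have hφapply : ∀ v, φ v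
      = (∑ i : Fin r, (v (i.castSucc, 0) • e1 i + v (i.castSucc, 1) • e2 i))
        + v (Fin.last r, 0) • n1 + v (Fin.last r, 1) • n2 := fun v => rfl
  -- surjectivity
  have hφsurj : Function.Surjective φ := by
    intro n
    obtain ⟨sb, tb, hst⟩ := Submodule.mem_span_pair.mp (g n).2
    rw [pow_one] at hst
    have h3 : g (n - sb • n1 - tb • n2) = 0 := by
      rw [map_sub, map_sub, map_smul, map_smul, hgn1, hgn2]
      simp only [smul_eq_mul] at hst
      ext
      simp only [Submodule.coe_sub, SetLike.val_smul, smul_eq_mul, ZeroMemClass.coe_zero]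
      linear_combination -hst
    obtain ⟨mm, hmm⟩ := (hex _).mp h3
    choose ma mb hmab using fun i => Submodule.mem_span_pair.mp (mm i).2
    set vv : Fin (r+1) × Fin 2 → AInf k := fun pq =>
      Fin.lastCases (motive := fun _ => Fin 2 → AInf k) (fun t => if t = 0 then sb else tb)
        (fun i t => if t = 0 then ma i else mb i) pq.1 pq.2 with hvv
    have hv1 : ∀ i : Fin r, vv (i.castSucc, (0 : Fin 2)) = ma i := fun i => by
      simp [hvv]
    have hv2 : ∀ i : Fin r, vv (i.castSucc, (1 : Fin 2)) = mb i := fun i => by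
      simp [hvv]
    have hv3 : vv (Fin.last r, 0) = sb := by simp [hvv]
    have hv4 : vv (Fin.last r, 1) = tb := by simp [hvv]
    refine ⟨vv, ?_⟩
    rw [hφapply, hv3, hv4]
    have hsum : ∑ i : Fin r, (vv (i.castSucc, 0) • e1 i + vv (i.castSucc, 1) • e2 i)
        = f mm := by
      rw [hfsum mm ma mb (fun i => by
        have := (hmab i).symm
        simpa [smul_eq_mul] using this)]
      exact Finset.sum_congr rfl fun i _ => by rw [hv1, hv2]
    rw [hsum, hmm]
    abel
  -- range of D is contained in ker φ
  have hrange : ∀ c, φ ((DMat k l u).mulVec c) = 0 := by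
    intro c
    rw [hφapply]
    have hterm : ∀ i : Fin r,
        (DMat k l u).mulVec c (i.castSucc, 0) • e1 i
          + (DMat k l u).mulVec c (i.castSucc, 1) • e2 i
        = (u i * c (Fin.last r, 1)) • e1 i := by
      intro i
      rw [hmv1, hmv1]
      rw [(hAv (l i)).1, (hAv (l i)).2.1, (hAv (l i)).2.2.1, (hAv (l i)).2.2.2]
      rw [if_pos rfl, if_neg one_ne_zero, zero_mul]
      linear_combination (norm := module) (c (i.castSucc, 0)) • hye1 i
        - (c (i.castSucc, 1)) • hze1 i
    rw [Finset.sum_congr rfl (fun i _ => hterm i), hmv2, hmv2,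
      (hAv 1).1, (hAv 1).2.1, (hAv 1).2.2.1, (hAv 1).2.2.2]
    have hs2 : ∑ i : Fin r, (u i * c (Fin.last r, 1)) • e1 i
        = c (Fin.last r, 1) • (zA k • n1 - xA k • n2) := by
      calc ∑ i : Fin r, (u i * c (Fin.last r, 1)) • e1 i
          = ∑ i : Fin r, c (Fin.last r, 1) • (-(uu i • e1 i)) := by
            refine Finset.sum_congr rfl fun i _ => ?_
            have hui : u i = -uu i := rfl
            rw [hui]
            module
        _ = c (Fin.last r, 1) • (-(∑ i : Fin r, uu i • e1 i)) := by
            rw [← Finset.smul_sum]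
            congr 1
            rw [← Finset.sum_neg_distrib]
        _ = c (Fin.last r, 1) • (zA k • n1 - xA k • n2) := by
            rw [← hkey, neg_sub]
    rw [hs2, pow_one]
    linear_combination (norm := module) (c (Fin.last r, 0)) • hyn1
  -- ker φ is contained in the range of D
  have hker : ∀ v, φ v = 0 → ∃ c, (DMat k l u).mulVec c = v := by
    intro v hv
    have hgv : v (Fin.last r, 0) * xA k + v (Fin.last r, 1) * zA k ^ 1 = 0 := by
      have h4 : g (φ v) = 0 := by rw [hv, map_zero]
      rw [hφapply] at h4
      have h5 : g (∑ i : Fin r, (v (i.castSucc, 0) • e1 i + v (i.castSucc, 1) • e2 i)) = 0 := by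
        rw [map_sum]
        refine Finset.sum_eq_zero fun i _ => ?_
        rw [map_add, map_smul, map_smul]
        rw [he1, he2]
        simp only [hgf]
        simp
      rw [map_add, map_add, h5, zero_add, map_smul, map_smul, hgn1, hgn2] at h4
      have h6 := congrArg (Subtype.val) h4
      simpa [smul_eq_mul, pow_one] using h6
    obtain ⟨sL, tL, hsL, htL⟩ := rel_syzygy 1 hgv
    have hres : ∀ i, (v (i.castSucc, 0) + tL * uu i) * xA k
        + v (i.castSucc, 1) * zA k ^ l i = 0 := by
      have h8 : φ v = ∑ i : Fin r,
          ((v (i.castSucc, 0) + tL * uu i) • e1 i + v (i.castSucc, 1) • e2 i) := by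
        rw [hφapply, hsL, htL]
        have h9 : (sL * yA k - tL * zA k ^ 1) • n1 + (tL * xA k) • n2
            = tL • ∑ i : Fin r, uu i • e1 i := by
          rw [← hkey, pow_one]
          linear_combination (norm := module) sL • hyn1
        rw [add_assoc, h9, Finset.smul_sum, ← Finset.sum_add_distrib]
        refine Finset.sum_congr rfl fun i _ => ?_
        module
      have h7 : f (fun i => (v (i.castSucc, 0) + tL * uu i)
            • (⟨xA k, hxmem (l i)⟩ : IIdeal k (l i))
          + v (i.castSucc, 1) • (⟨zA k ^ l i, hzmem (l i)⟩ : IIdeal k (l i))) = 0 := by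
        rw [hfsum _ (fun i => v (i.castSucc, 0) + tL * uu i) (fun i => v (i.castSucc, 1))
          (fun i => by simp [smul_eq_mul])]
        rw [← h8, hv]
      have h10 : (fun i => (v (i.castSucc, 0) + tL * uu i)
            • (⟨xA k, hxmem (l i)⟩ : IIdeal k (l i))
          + v (i.castSucc, 1) • (⟨zA k ^ l i, hzmem (l i)⟩ : IIdeal k (l i)))
          = (0 : ∀ i : Fin r, IIdeal k (l i)) := by
        apply hinj
        rw [h7, map_zero]
      intro i
      have h11 := congrArg (fun w => ((w i : IIdeal k (l i)) : AInf k)) h10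
      simpa [smul_eq_mul] using h11
    choose si ti hsi hti using fun i => rel_syzygy (l i) (hres i)
    set cvec : Fin (r+1) × Fin 2 → AInf k := fun pq =>
      Fin.lastCases (motive := fun _ => Fin 2 → AInf k) (fun t => if t = 0 then sL else tL)
        (fun i t => if t = 0 then si i else ti i) pq.1 pq.2 with hcvec
    have hc0 : cvec (Fin.last r, 0) = sL := by simp [hcvec]
    have hc1 : cvec (Fin.last r, 1) = tL := by simp [hcvec]
    have hc2 : ∀ i : Fin r, cvec (i.castSucc, (0 : Fin 2)) = si i := fun i => by simp [hcvec]
    have hc3 : ∀ i : Fin r, cvec (i.castSucc, (1 : Fin 2)) = ti i := fun i => by simp [hcvec]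
    refine ⟨cvec, ?_⟩
    funext pq
    obtain ⟨j, s⟩ := pq
    refine Fin.lastCases ?_ ?_ j
    · rw [hmv2, hc0, hc1]
      fin_cases s <;> simp only [Fin.zero_eta, Fin.mk_one]
      · rw [(hAv 1).1, (hAv 1).2.1]
        linear_combination -hsL
      · rw [(hAv 1).2.2.1, (hAv 1).2.2.2]
        linear_combination -htL
    · intro i
      rw [hmv1, hc2 i, hc3 i, hc1]
      fin_cases s <;> simp only [Fin.zero_eta, Fin.mk_one]
      · rw [(hAv (l i)).1, (hAv (l i)).2.1, if_true]
        have hui : u i = -uu i := rfl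
        rw [hui]
        linear_combination -hsi i
      · rw [(hAv (l i)).2.2.1, (hAv (l i)).2.2.2, if_neg (by decide : ¬((1 : Fin 2) = 0))]
        linear_combination -hti i
  -- assemble
  have hkereq : LinearMap.ker φ = LinearMap.range (Matrix.toLin' (DMat k l u)) := by
    apply le_antisymm
    · intro v hv
      rw [LinearMap.mem_ker] at hv
      obtain ⟨c, hc⟩ := hker v hv
      exact ⟨c, by rw [Matrix.toLin'_apply]; exact hc⟩
    · rintro v ⟨c, rfl⟩
      rw [LinearMap.mem_ker, Matrix.toLin'_apply]
      exact hrange c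
  exact ⟨u, hunit, ⟨(LinearMap.quotKerEquivOfSurjective φ hφsurj).symm.trans
    (Submodule.quotEquivOfEq _ _ hkereq)⟩⟩
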